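/- Let X and Y be vector spaces over ℝ and let g : X → Y satisfy: there exist a*, a₀*, a₁* ∈ X such that g(a₀*) - g(a*) and g(a₁*) - g(a*) are linearly independent in Y. Then g is an affine mapping if and only if g satisfies both: (i) for every line L ⊆ X, the image g '' L is either a point or a line in Y, and (ii) for all a, b, c ∈ X with c in the open segment between a and b, either g(a) = g(b) = g(c), or g(c) lies in the open segment between g(a) and g(b). -/

import Mathlib

def IsLine {X : Type*} [AddCommGroup X] [Module ℝ X] (L : Set X) : Prop :=
  ∃ o d : X, d ≠ 0 ∧ L = {x | ∃ r : ℝ, x = r • d + o}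

def IsPoint {X : Type*} (S : Set X) : Prop := ∃ p : X, S = {p}

/-- `c` lies in the open segment between `a` and `b`. -/
def InOpenSegment {X : Type*} [AddCommGroup X] [Module ℝ X] (a b c : X) : Prop :=
  ∃ t : ℝ, 0 < t ∧ t < 1 ∧ c = t • (b - a) + a

/-- `g` is an affine mapping: a linear map plus a constant. -/
def IsAffineMapping {X Y : Type*} [AddCommGroup X] [Module ℝ X]
    [AddCommGroup Y] [Module ℝ Y] (g : X → Y) : Prop :=
  ∃ (f : X → Y) (b : Y),
    (∀ (c : ℝ) (a : X), f (c • a) = c • f a) ∧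
    (∀ a a' : X, f (a + a') = f a + f a') ∧
    (∀ a : X, g a = f a + b)

section Aux
variable {X Y : Type*} [AddCommGroup X] [Module ℝ X] [AddCommGroup Y] [Module ℝ Y]

/-- cancel a nonzero vector -/
lemma aux_smul_cancel {v : Y} (hv : v ≠ 0) {r s : ℝ} (h : r • v = s • v) : r = s := by
  have h2 : (r - s) • v = 0 := by rw [sub_smul, h, sub_self]
  rcases smul_eq_zero.mp h2 with h | h
  · linarith
  · exact absurd h hv

/-- A line cannot be contained in an open ray `{t • w + c | t > 0}`. -/
lemma aux_no_line_in_ray {d o w c : Y} (hd : d ≠ 0)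
    (h : ∀ r : ℝ, ∃ t : ℝ, 0 < t ∧ r • d + o = t • w + c) : False := by
  choose t ht0 hteq using h
  have h0 := hteq 0
  rw [zero_smul, zero_add] at h0
  have h1 := hteq 1
  rw [one_smul] at h1
  have hdw : d = (t 1 - t 0) • w := by
    have : d + o - o = (t 1 • w + c) - (t 0 • w + c) := by rw [← h0, ← h1]
    simpa [sub_smul] using this
  have hw : w ≠ 0 := by
    intro hw0; rw [hw0, smul_zero] at hdw; exact hd hdw
  have hk : t 1 - t 0 ≠ 0 := by
    intro hk0; rw [hk0, zero_smul] at hdw; exact hd hdw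
  set κ := t 1 - t 0 with hκ
  have hlin : ∀ r : ℝ, t r = t 0 + r * κ := by
    intro r
    have := hteq r
    rw [hdw, h0] at this
    have h2 : (r * κ) • w = (t r - t 0) • w := by
      have h3 : r • κ • w + (t 0 • w + c) - (t 0 • w + c) = t r • w + c - (t 0 • w + c) := by
        rw [this]
      simpa [smul_smul, sub_smul] using h3
    have := aux_smul_cancel hw h2
    linarith
  have := ht0 ((-1 - t 0) / κ)
  rw [hlin ((-1 - t 0) / κ), div_mul_cancel₀ _ hk] at this
  linarith

/-- From non-independence extract a multiple. -/
lemma aux_dep {u v : Y} (hv : v ≠ 0)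
    (h : ¬ ∀ r s : ℝ, r • u + s • v = 0 → r = 0 ∧ s = 0) : ∃ β : ℝ, u = β • v := by
  push_neg at h
  obtain ⟨r, s, hrs, hne⟩ := h
  by_cases hr : r = 0
  · subst hr
    rw [zero_smul, zero_add] at hrs
    rcases smul_eq_zero.mp hrs with h | h
    · exact absurd h (hne rfl)
    · exact absurd h hv
  · refine ⟨-s / r, ?_⟩
    have hru : r • u = -(s • v) := eq_neg_of_add_eq_zero_left hrs
    calc u = r⁻¹ • (r • u) := by rw [smul_smul, inv_mul_cancel₀ hr, one_smul]
      _ = r⁻¹ • (-(s • v)) := by rw [hru]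
      _ = (-s / r) • v := by
          rw [smul_neg, smul_smul, ← neg_smul]
          congr 1
          field_simp

/-- Cone lemma: a line inside `{α • e1 + t • u + c | t ∈ (0,1)}` has direction parallel to `e1`. -/
lemma aux_cone_dir {e' o' e1 u c : Y} (he' : e' ≠ 0) (he1 : e1 ≠ 0)
    (h : ∀ r : ℝ, ∃ α t : ℝ, 0 < t ∧ t < 1 ∧ r • e' + o' = α • e1 + (t • u + c)) :
    ∃ κ : ℝ, κ ≠ 0 ∧ e' = κ • e1 := by
  choose α t ht0 ht1 heq using h
  by_cases hdep : ∃ β : ℝ, u = β • e1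
  · obtain ⟨β, rfl⟩ := hdep
    have heq' : ∀ r : ℝ, r • e' + o' = (α r + t r * β) • e1 + c := by
      intro r; rw [heq r]; module
    have h0 := heq' 0; rw [zero_smul, zero_add] at h0
    have h1 := heq' 1; rw [one_smul] at h1
    refine ⟨(α 1 + t 1 * β) - (α 0 + t 0 * β), ?_, ?_⟩
    · intro hk0
      have : e' = ((α 1 + t 1 * β) - (α 0 + t 0 * β)) • e1 := by
        have : e' + o' - o' = ((α 1 + t 1 * β) • e1 + c) - ((α 0 + t 0 * β) • e1 + c) := by
          rw [← h0, ← h1]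
        simpa [sub_smul] using this
      rw [hk0, zero_smul] at this; exact he' this
    · have : e' + o' - o' = ((α 1 + t 1 * β) • e1 + c) - ((α 0 + t 0 * β) • e1 + c) := by
        rw [← h0, ← h1]
      simpa [sub_smul] using this
  · have hind : ∀ a b : ℝ, a • e1 + b • u = 0 → a = 0 ∧ b = 0 := by
      intro a b hab
      by_cases hb : b = 0
      · subst hb
        rw [zero_smul, add_zero] at hab
        rcases smul_eq_zero.mp hab with h | h
        · exact ⟨h, rfl⟩
        · exact absurd h he1
      · exfalso
        apply hdep
        refine ⟨-a / b, ?_⟩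
        have hbu : b • u = -(a • e1) := by
          have h4 : b • u + a • e1 = 0 := by rw [add_comm]; exact hab
          exact eq_neg_of_add_eq_zero_left h4
        calc u = b⁻¹ • (b • u) := by rw [smul_smul, inv_mul_cancel₀ hb, one_smul]
          _ = b⁻¹ • (-(a • e1)) := by rw [hbu]
          _ = (-a / b) • e1 := by
              rw [smul_neg, smul_smul, ← neg_smul]
              congr 1
              field_simp
    have h0 := heq 0; rw [zero_smul, zero_add] at h0
    have hdiff : ∀ r : ℝ, r • e' = (α r - α 0) • e1 + (t r - t 0) • u := by
      intro r
      have : r • e' + o' - o' = (α r • e1 + (t r • u + c)) - (α 0 • e1 + (t 0 • u + c)) := by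
        rw [← h0, ← heq r]
      rw [add_sub_cancel_right] at this
      rw [this]; module
    have h1 := hdiff 1; rw [one_smul] at h1
    set A := α 1 - α 0
    set B := t 1 - t 0
    have hrel : ∀ r : ℝ, (r * A - (α r - α 0)) • e1 + (r * B - (t r - t 0)) • u = 0 := by
      intro r
      have h2 := hdiff r
      rw [h1] at h2
      have h3 : (r * A - (α r - α 0)) • e1 + (r * B - (t r - t 0)) • u
          = r • (A • e1 + B • u) - ((α r - α 0) • e1 + (t r - t 0) • u) := by module
      rw [h3, h2, sub_self]
    have hlin : ∀ r : ℝ, t r = t 0 + r * B := by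
      intro r
      have := (hind _ _ (hrel r)).2
      linarith
    have hB : B = 0 := by
      by_contra hB
      have := ht1 ((2 - t 0) / B)
      rw [hlin ((2 - t 0) / B), div_mul_cancel₀ _ hB] at this
      linarith
    have hA : e' = A • e1 := by
      have := h1; rw [hB, zero_smul, add_zero] at this; exact this
    refine ⟨A, ?_, hA⟩
    intro hA0; rw [hA0, zero_smul] at hA; exact he' hA
end Aux

section Aux2
variable {X Y : Type*} [AddCommGroup X] [Module ℝ X] [AddCommGroup Y] [Module ℝ Y]
variable {g : X → Y}

lemma aux_const_on_seg
    (hseg : ∀ a b c : X, InOpenSegment a b c →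
      (g a = g c ∧ g b = g c) ∨ InOpenSegment (g a) (g b) (g c))
    {a b c : X} (hab : g a = g b) (hc : InOpenSegment a b c) : g c = g a := by
  rcases hseg a b c hc with ⟨h1, _⟩ | ⟨t, ht0, ht1, h⟩
  · exact h1.symm
  · rw [hab] at h ⊢
    rw [h, sub_self, smul_zero, zero_add]

lemma aux_const_on_line
    (hseg : ∀ a b c : X, InOpenSegment a b c →
      (g a = g c ∧ g b = g c) ∨ InOpenSegment (g a) (g b) (g c))
    {a b : X} (hab : g a = g b) (t : ℝ) : g (t • (b - a) + a) = g a := by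
  rcases lt_trichotomy t 0 with h | h | h
  · -- t < 0 : a is between x and b
    have h1t : (1:ℝ) - t ≠ 0 := by linarith
    have hmem : InOpenSegment (t • (b - a) + a) b a := by
      refine ⟨-t / (1 - t), div_pos (by linarith) (by linarith),
        (div_lt_one (by linarith)).mpr (by linarith), ?_⟩
      match_scalars <;> field_simp <;> ring
    rcases hseg _ _ _ hmem with ⟨h1, _⟩ | ⟨s, hs0, hs1, hs⟩
    · exact h1
    · -- hs : g a = s • (g b - g x) + g x
      rw [← hab] at hs
      have h3 : g a - g (t • (b - a) + a) = s • (g a - g (t • (b - a) + a)) := by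
        nth_rewrite 1 [hs]
        rw [add_sub_cancel_right]
      have h4 : (1 - s) • (g a - g (t • (b - a) + a)) = 0 := by
        rw [sub_smul, one_smul, ← h3, sub_self]
      rcases smul_eq_zero.mp h4 with h5 | h5
      · exfalso; linarith
      · exact (sub_eq_zero.mp h5).symm
  · subst h; simp
  · rcases lt_trichotomy t 1 with h1 | h1 | h1
    · exact aux_const_on_seg hseg hab ⟨t, h, h1, rfl⟩
    · subst h1
      rw [one_smul, sub_add_cancel]
      exact hab.symm
    · -- t > 1 : b is between a and x
      have ht : t ≠ 0 := by linarith
      have hmem : InOpenSegment a (t • (b - a) + a) b := by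
        refine ⟨1 / t, by positivity, (div_lt_one (by linarith)).mpr (by linarith), ?_⟩
        match_scalars <;> field_simp <;> ring
      rcases hseg _ _ _ hmem with ⟨_, h3⟩ | ⟨s, hs0, hs1, hs⟩
      · exact h3.trans hab.symm
      · rw [← hab] at hs
        have h4 : s • (g (t • (b - a) + a) - g a) = 0 := right_eq_add.mp hs
        rcases smul_eq_zero.mp h4 with h5 | h5
        · exfalso; linarith
        · exact sub_eq_zero.mp h5
end Aux2

section Aux3
variable {X Y : Type*} [AddCommGroup X] [Module ℝ X] [AddCommGroup Y] [Module ℝ Y]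
variable {g : X → Y}

/-- solve `w = σ • (y - n) + n` for `n`. -/
lemma aux_solve {σ : ℝ} (hσ : σ < 1) {w y n : Y} (h : w = σ • (y - n) + n) :
    n = (1/(1-σ)) • (w - y) + y := by
  have h1σ : (1:ℝ) - σ ≠ 0 := by linarith
  have h2 : (1 - σ) • n = (1-σ) • ((1/(1-σ)) • (w - y) + y) := by
    rw [smul_add, smul_smul, mul_one_div, div_self h1σ, one_smul]
    rw [h]
    module
  exact smul_right_injective Y h1σ h2

lemma aux_translate
    (hseg : ∀ a b c : X, InOpenSegment a b c →
      (g a = g c ∧ g b = g c) ∨ InOpenSegment (g a) (g b) (g c))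
    (hline : ∀ L : Set X, IsLine L → IsPoint (g '' L) ∨ IsLine (g '' L))
    {p q : X} (hpq : g p = g q) (v : X) : g (p + v) = g (q + v) := by
  by_cases hpq' : p = q
  · rw [hpq']
  · have he0 : q - p ≠ 0 := sub_ne_zero.mpr (Ne.symm hpq')
    set e := q - p with he
    have hM : ∀ t : ℝ, g (t • e + p) = g p := fun t => aux_const_on_line hseg hpq t
    have hZmid : ∀ t : ℝ, InOpenSegment (p + v) ((2*t) • e + p)
        ((1/2 : ℝ) • v + t • e + p) := by
      intro t
      exact ⟨1/2, by norm_num, by norm_num, by match_scalars <;> ring⟩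
    have hqv : q + v = (1:ℝ) • e + (p + v) := by rw [he]; module
    by_cases hq1 : g (p + v) = g p
    · -- case α : g is constant (= g p) onn the mid-line Z
      have hZ : ∀ t : ℝ, g ((1/2 : ℝ) • v + t • e + p) = g p := by
        intro t
        have h1 : g (p + v) = g ((2*t) • e + p) := by rw [hq1, hM]
        have h2 := aux_const_on_seg hseg h1 (hZmid t)
        rw [h2, hq1]
      have hmem : InOpenSegment (q + v) p ((1/2:ℝ) • v + (1/2:ℝ) • e + p) := by
        refine ⟨1/2, by norm_num, by norm_num, ?_⟩
        rw [he]; match_scalars <;> ring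
      have hz' : g ((1/2:ℝ) • v + (1/2:ℝ) • e + p) = g p := hZ (1/2)
      rw [hq1]
      rcases hseg _ _ _ hmem with ⟨h1, _⟩ | ⟨s, hs0, hs1, hs⟩
      · exact (h1.trans hz').symm
      · rw [hz'] at hs
        have h6 := aux_solve hs1 hs
        rw [sub_self, smul_zero, zero_add] at h6
        exact h6.symm
    · -- case β
      have hZrel : ∀ t : ℝ, ∃ s : ℝ, 0 < s ∧ s < 1 ∧
          g ((1/2:ℝ) • v + t • e + p) = s • (g p - g (p + v)) + g (p + v) := by
        intro t
        rcases hseg _ _ _ (hZmid t) with ⟨h1, h2⟩ | ⟨s, hs0, hs1, hs⟩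
        · exact absurd (h1.trans (h2.symm.trans (hM (2*t)))) hq1
        · exact ⟨s, hs0, hs1, by rw [hs, hM]⟩
      have hform : ∀ t : ℝ, t • e + (p + (1/2:ℝ) • v) = (1/2:ℝ) • v + t • e + p := by
        intro t; abel
      rcases hline {x : X | ∃ r : ℝ, x = r • e + (p + (1/2:ℝ) • v)} ⟨_, e, he0, rfl⟩ with
        ⟨y', hy'⟩ | ⟨oz, dz, hdz, hzeq⟩
      · -- g '' Z = {y'}
        have hy'val : ∀ t : ℝ, g ((1/2:ℝ) • v + t • e + p) = y' := by
          intro t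
          have hmem : g ((1/2:ℝ) • v + t • e + p) ∈
              g '' {x : X | ∃ r : ℝ, x = r • e + (p + (1/2:ℝ) • v)} :=
            ⟨_, ⟨t, (hform t).symm⟩, rfl⟩
          rw [hy'] at hmem
          exact hmem
        have hN : ∀ s : ℝ, ∃ lam : ℝ, 0 < lam ∧
            g (s • e + (p + v)) = lam • (y' - g p) + g p := by
          intro s
          have hmem : InOpenSegment (s • e + (p + v)) p ((1/2:ℝ) • v + (s/2) • e + p) :=
            ⟨1/2, by norm_num, by norm_num, by match_scalars <;> ring⟩
          rcases hseg _ _ _ hmem with ⟨h1, h2⟩ | ⟨σ, hσ0, hσ1, hσeq⟩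
          · refine ⟨1, one_pos, ?_⟩
            rw [h1.trans (hy'val (s/2)), ← (h2.trans (hy'val (s/2))), sub_self,
              smul_zero, zero_add]
          · rw [hy'val (s/2)] at hσeq
            refine ⟨1/(1-σ), one_div_pos.mpr (by linarith), aux_solve hσ1 hσeq⟩
        rcases hline {x : X | ∃ r : ℝ, x = r • e + (p + v)} ⟨_, e, he0, rfl⟩ with
          ⟨yn, hyn⟩ | ⟨onn, dn, hdn, hneq⟩
        · have h1 : g (p + v) ∈ g '' {x : X | ∃ r : ℝ, x = r • e + (p + v)} :=
            ⟨p + v, ⟨0, by rw [zero_smul, zero_add]⟩, rfl⟩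
          have h2 : g (q + v) ∈ g '' {x : X | ∃ r : ℝ, x = r • e + (p + v)} :=
            ⟨q + v, ⟨1, hqv⟩, rfl⟩
          rw [hyn] at h1 h2
          rw [h1, h2]
        · exfalso
          apply aux_no_line_in_ray hdn (o := onn) (w := y' - g p) (c := g p)
          intro r
          have hmem : r • dn + onn ∈ g '' {x : X | ∃ r : ℝ, x = r • e + (p + v)} := by
            rw [hneq]; exact ⟨r, rfl⟩
          obtain ⟨x, ⟨s, rfl⟩, hx⟩ := hmem
          obtain ⟨lam, hlam0, hlameq⟩ := hN s
          exact ⟨lam, hlam0, by rw [← hx, hlameq]⟩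
      · -- g '' Z is a line: impossible
        exfalso
        apply aux_no_line_in_ray hdz (o := oz) (w := g p - g (p + v)) (c := g (p + v))
        intro r
        have hmem : r • dz + oz ∈
            g '' {x : X | ∃ r : ℝ, x = r • e + (p + (1/2:ℝ) • v)} := by
          rw [hzeq]; exact ⟨r, rfl⟩
        obtain ⟨x, ⟨s, rfl⟩, hx⟩ := hmem
        obtain ⟨σ, hσ0, _, hσeq⟩ := hZrel s
        refine ⟨σ, hσ0, ?_⟩
        rw [← hx, hform s, hσeq]
end Aux3

section Aux4
variable {X Y : Type*} [AddCommGroup X] [Module ℝ X] [AddCommGroup Y] [Module ℝ Y]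
variable {g : X → Y}

lemma aux_parallel
    (hseg : ∀ a b c : X, InOpenSegment a b c →
      (g a = g c ∧ g b = g c) ∨ InOpenSegment (g a) (g b) (g c))
    (hline : ∀ L : Set X, IsLine L → IsPoint (g '' L) ∨ IsLine (g '' L))
    {p e d : X} (hd : d ≠ 0) {x1 x1' x2 x2' : X}
    (h1 : ∃ t : ℝ, x1 = t • d + p) (h1' : ∃ t : ℝ, x1' = t • d + p)
    (h2 : ∃ t : ℝ, x2 = t • d + (p + e)) (h2' : ∃ t : ℝ, x2' = t • d + (p + e))
    (hg1 : g x1 ≠ g x1') (hg2 : g x2 ≠ g x2') :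
    ∃ lam : ℝ, lam ≠ 0 ∧ g x2 - g x2' = lam • (g x1 - g x1') := by
  -- the image of line A is a line
  rcases hline {x : X | ∃ t : ℝ, x = t • d + p} ⟨p, d, hd, rfl⟩ with ⟨pt, hpt⟩ | ⟨oA, eA, heA, hAeq⟩
  · exfalso
    have m1 : g x1 ∈ g '' {x : X | ∃ t : ℝ, x = t • d + p} := ⟨x1, h1, rfl⟩
    have m2 : g x1' ∈ g '' {x : X | ∃ t : ℝ, x = t • d + p} := ⟨x1', h1', rfl⟩
    rw [hpt] at m1 m2
    exact hg1 (m1.trans m2.symm)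
  rcases hline {x : X | ∃ t : ℝ, x = t • d + (p + e)} ⟨p + e, d, hd, rfl⟩ with
    ⟨pt, hpt⟩ | ⟨oB, eB, heB, hBeq⟩
  · exfalso
    have m1 : g x2 ∈ g '' {x : X | ∃ t : ℝ, x = t • d + (p + e)} := ⟨x2, h2, rfl⟩
    have m2 : g x2' ∈ g '' {x : X | ∃ t : ℝ, x = t • d + (p + e)} := ⟨x2', h2', rfl⟩
    rw [hpt] at m1 m2
    exact hg2 (m1.trans m2.symm)
  have coordA : ∀ x : X, (∃ t : ℝ, x = t • d + p) → ∃ r : ℝ, g x = r • eA + oA := by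
    intro x hx
    have : g x ∈ g '' {x : X | ∃ t : ℝ, x = t • d + p} := ⟨x, hx, rfl⟩
    rw [hAeq] at this
    exact this
  have coordB : ∀ x : X, (∃ t : ℝ, x = t • d + (p + e)) → ∃ r : ℝ, g x = r • eB + oB := by
    intro x hx
    have : g x ∈ g '' {x : X | ∃ t : ℝ, x = t • d + (p + e)} := ⟨x, hx, rfl⟩
    rw [hBeq] at this
    exact this
  obtain ⟨r1, hr1⟩ := coordA x1 h1
  obtain ⟨r1', hr1'⟩ := coordA x1' h1'
  have hdiff1 : g x1 - g x1' = (r1 - r1') • eA := by rw [hr1, hr1']; module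
  have hrr : r1 - r1' ≠ 0 := by
    intro hc
    apply hg1
    rw [← sub_eq_zero, hdiff1, hc, zero_smul]
  suffices hmain : (∃ μ : ℝ, μ ≠ 0 ∧ eB = μ • eA) ∨
      (∀ x : X, (∃ t : ℝ, x = t • d + (p + e)) → ∃ r : ℝ, g x = r • eA + oA) by
    rcases hmain with ⟨μ, hμ, hBA⟩ | hcB
    · obtain ⟨s2, hs2⟩ := coordB x2 h2
      obtain ⟨s2', hs2'⟩ := coordB x2' h2'
      have hdiff2 : g x2 - g x2' = (s2 - s2') • eB := by rw [hs2, hs2']; module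
      have hss : s2 - s2' ≠ 0 := by
        intro hc
        apply hg2
        rw [← sub_eq_zero, hdiff2, hc, zero_smul]
      refine ⟨(s2 - s2') * μ / (r1 - r1'), div_ne_zero (mul_ne_zero hss hμ) hrr, ?_⟩
      rw [hdiff2, hdiff1, hBA, smul_smul, smul_smul]
      congr 1
      field_simp
    · obtain ⟨s2, hs2⟩ := hcB x2 h2
      obtain ⟨s2', hs2'⟩ := hcB x2' h2'
      have hdiff2 : g x2 - g x2' = (s2 - s2') • eA := by rw [hs2, hs2']; module
      have hss : s2 - s2' ≠ 0 := by
        intro hc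
        apply hg2
        rw [← sub_eq_zero, hdiff2, hc, zero_smul]
      refine ⟨(s2 - s2') / (r1 - r1'), div_ne_zero hss hrr, ?_⟩
      rw [hdiff2, hdiff1, smul_smul]
      congr 1
      field_simp
  by_cases hcross : ∃ t s : ℝ, g (t • d + p) = g (s • d + (p + e))
  · right
    obtain ⟨t0, s0, hts⟩ := hcross
    rintro x ⟨τ, rfl⟩
    have key := aux_translate hseg hline hts ((τ - s0) • d)
    have e1 : t0 • d + p + (τ - s0) • d = (t0 + τ - s0) • d + p := by module
    have e2 : s0 • d + (p + e) + (τ - s0) • d = τ • d + (p + e) := by module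
    rw [e1, e2] at key
    obtain ⟨r, hr⟩ := coordA _ ⟨t0 + τ - s0, rfl⟩
    exact ⟨r, by rw [← key, hr]⟩
  · left
    push_neg at hcross
    have hpe : (0:ℝ) • d + (p + e) = p + e := by rw [zero_smul, zero_add]
    have hp0 : (0:ℝ) • d + p = p := by rw [zero_smul, zero_add]
    have hZrel : ∀ t : ℝ, ∃ τ : ℝ, 0 < τ ∧ τ < 1 ∧
        g (t • d + (p + (1/2:ℝ) • e)) =
          τ • (g (p + e) - g ((2*t) • d + p)) + g ((2*t) • d + p) := by
      intro t
      have hmem : InOpenSegment ((2*t) • d + p) (p + e) (t • d + (p + (1/2:ℝ) • e)) :=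
        ⟨1/2, by norm_num, by norm_num, by match_scalars <;> ring⟩
      rcases hseg _ _ _ hmem with ⟨ha, hb⟩ | ⟨τ, hτ0, hτ1, hτ⟩
      · exact absurd (by rw [hpe]; exact ha.trans hb.symm) (hcross (2*t) 0)
      · exact ⟨τ, hτ0, hτ1, hτ⟩
    rcases hline {x : X | ∃ t : ℝ, x = t • d + (p + (1/2:ℝ) • e)}
        ⟨p + (1/2:ℝ) • e, d, hd, rfl⟩ with ⟨w, hw⟩ | ⟨oZ, eZ, heZ, hZeq⟩
    · -- the mid-line maps to a point : impossible
      exfalso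
      have hwval : ∀ t : ℝ, g (t • d + (p + (1/2:ℝ) • e)) = w := by
        intro t
        have : g (t • d + (p + (1/2:ℝ) • e)) ∈
            g '' {x : X | ∃ t : ℝ, x = t • d + (p + (1/2:ℝ) • e)} := ⟨_, ⟨t, rfl⟩, rfl⟩
        rw [hw] at this
        exact this
      apply aux_no_line_in_ray heA (o := oA) (w := w - g (p + e)) (c := g (p + e))
      intro r
      have hmem : r • eA + oA ∈ g '' {x : X | ∃ t : ℝ, x = t • d + p} := by
        rw [hAeq]; exact ⟨r, rfl⟩
      obtain ⟨x, ⟨t', rfl⟩, hx⟩ := hmem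
      obtain ⟨τ, hτ0, hτ1, hτeq⟩ := hZrel (t'/2)
      rw [hwval (t'/2)] at hτeq
      have ht'' : 2*(t'/2) = t' := by ring
      rw [ht''] at hτeq
      have hsol := aux_solve hτ1 hτeq
      exact ⟨1/(1-τ), one_div_pos.mpr (by linarith), by rw [← hx, hsol]⟩
    · -- the mid-line maps to a line: compare directions via the cone lemma
      have hconeA : ∃ κ : ℝ, κ ≠ 0 ∧ eZ = κ • eA := by
        apply aux_cone_dir heZ heA (u := oA - g (p + e)) (c := g (p + e)) (o' := oZ)
        intro r
        have hmem : r • eZ + oZ ∈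
            g '' {x : X | ∃ t : ℝ, x = t • d + (p + (1/2:ℝ) • e)} := by
          rw [hZeq]; exact ⟨r, rfl⟩
        obtain ⟨x, ⟨t', rfl⟩, hx⟩ := hmem
        obtain ⟨τ, hτ0, hτ1, hτeq⟩ := hZrel t'
        obtain ⟨α, hα⟩ := coordA ((2*t') • d + p) ⟨2*t', rfl⟩
        refine ⟨(1-τ)*α, 1-τ, by linarith, by linarith, ?_⟩
        rw [← hx, hτeq, hα]
        module
      have hZrel' : ∀ t : ℝ, ∃ τ : ℝ, 0 < τ ∧ τ < 1 ∧
          g (t • d + (p + (1/2:ℝ) • e)) =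
            τ • (g p - g ((2*t) • d + (p + e))) + g ((2*t) • d + (p + e)) := by
        intro t
        have hmem : InOpenSegment ((2*t) • d + (p + e)) p (t • d + (p + (1/2:ℝ) • e)) :=
          ⟨1/2, by norm_num, by norm_num, by match_scalars <;> ring⟩
        rcases hseg _ _ _ hmem with ⟨ha, hb⟩ | ⟨τ, hτ0, hτ1, hτ⟩
        · exact absurd (by rw [hp0]; exact hb.trans ha.symm) (hcross 0 (2*t))
        · exact ⟨τ, hτ0, hτ1, hτ⟩
      have hconeB : ∃ κ : ℝ, κ ≠ 0 ∧ eZ = κ • eB := by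
        apply aux_cone_dir heZ heB (u := oB - g p) (c := g p) (o' := oZ)
        intro r
        have hmem : r • eZ + oZ ∈
            g '' {x : X | ∃ t : ℝ, x = t • d + (p + (1/2:ℝ) • e)} := by
          rw [hZeq]; exact ⟨r, rfl⟩
        obtain ⟨x, ⟨t', rfl⟩, hx⟩ := hmem
        obtain ⟨τ, hτ0, hτ1, hτeq⟩ := hZrel' t'
        obtain ⟨α, hα⟩ := coordB ((2*t') • d + (p + e)) ⟨2*t', rfl⟩
        refine ⟨(1-τ)*α, 1-τ, by linarith, by linarith, ?_⟩
        rw [← hx, hτeq, hα]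
        module
      obtain ⟨κ1, hκ1, h1A⟩ := hconeA
      obtain ⟨κ2, hκ2, h2B⟩ := hconeB
      refine ⟨κ1/κ2, div_ne_zero hκ1 hκ2, ?_⟩
      have hB2 : eB = κ2⁻¹ • (κ2 • eB) := by rw [smul_smul, inv_mul_cancel₀ hκ2, one_smul]
      rw [hB2, ← h2B, h1A, smul_smul]
      congr 1
      field_simp
end Aux4

section Aux5
variable {X Y : Type*} [AddCommGroup X] [Module ℝ X] [AddCommGroup Y] [Module ℝ Y]
variable {g : X → Y}

lemma aux_parallelogram
    (hseg : ∀ a b c : X, InOpenSegment a b c →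
      (g a = g c ∧ g b = g c) ∨ InOpenSegment (g a) (g b) (g c))
    (hline : ∀ L : Set X, IsLine L → IsPoint (g '' L) ∨ IsLine (g '' L))
    {a b c : X}
    (hind2 : ∀ r s : ℝ, r • (g c - g a) + s • (g b - g a) = 0 → r = 0 ∧ s = 0) :
    g (a + b - c) = g a + g b - g c := by
  have hca : g c ≠ g a := by
    intro h
    have := (hind2 1 0 (by rw [h, sub_self, smul_zero, zero_smul, add_zero])).1
    norm_num at this
  have hba : g b ≠ g a := by
    intro h
    have := (hind2 0 1 (by rw [h, sub_self, smul_zero, zero_smul, zero_add])).2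
    norm_num at this
  have hbc : g b ≠ g c := by
    intro h
    have h2 : (1:ℝ) • (g c - g a) + (-1:ℝ) • (g b - g a) = 0 := by rw [h]; module
    have := (hind2 1 (-1) h2).1
    norm_num at this
  have hd1 : c - a ≠ 0 := by
    intro h
    exact hca (by rw [sub_eq_zero.mp h])
  have hd2 : b - c ≠ 0 := by
    intro h
    exact hbc (by rw [sub_eq_zero.mp h])
  -- memberships on the four lines
  have ha1 : a = (0:ℝ) • (c - a) + a := by module
  have hc1 : c = (1:ℝ) • (c - a) + a := by module
  have hc2B1 : a + b - c = (0:ℝ) • (c - a) + (a + (b - c)) := by module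
  have hbB1 : b = (1:ℝ) • (c - a) + (a + (b - c)) := by module
  have ha2 : a = (0:ℝ) • (b - c) + a := by module
  have hc2A2 : a + b - c = (1:ℝ) • (b - c) + a := by module
  have hcB2 : c = (0:ℝ) • (b - c) + (a + (c - a)) := by module
  have hbB2 : b = (1:ℝ) • (b - c) + (a + (c - a)) := by module
  -- step 1 : g (a+b-c) ≠ g b
  have hne_b : g (a + b - c) ≠ g b := by
    intro h
    obtain ⟨lam, hlam, heq⟩ := aux_parallel hseg hline hd2
      (x1 := a + b - c) (x1' := a) (x2 := b) (x2' := c)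
      ⟨1, hc2A2⟩ ⟨0, ha2⟩ ⟨1, hbB2⟩ ⟨0, hcB2⟩
      (show g (a + b - c) ≠ g a by rw [h]; exact hba) hbc
    -- heq : g b - g c = lam • (g (a+b-c) - g a) = lam • (g b - g a)
    rw [h] at heq
    have h3 : (-1:ℝ) • (g c - g a) + (1 - lam) • (g b - g a) = 0 := by
      rw [sub_smul, one_smul, ← heq]; module
    have := (hind2 _ _ h3).1
    norm_num at this
  -- step 2 : g (a+b-c) ≠ g a
  have hP1 := aux_parallel hseg hline hd1
    (x1 := c) (x1' := a) (x2 := b) (x2' := a + b - c)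
    ⟨1, hc1⟩ ⟨0, ha1⟩ ⟨1, hbB1⟩ ⟨0, hc2B1⟩ hca (fun h => hne_b h.symm)
  obtain ⟨lam1, hlam1, heq1⟩ := hP1
  -- heq1 : g b - g (a+b-c) = lam1 • (g c - g a)
  have hne_a : g (a + b - c) ≠ g a := by
    intro h
    rw [h] at heq1
    have h3 : lam1 • (g c - g a) + (-1:ℝ) • (g b - g a) = 0 := by
      rw [← heq1]; module
    have := (hind2 _ _ h3).2
    norm_num at this
  have hP2 := aux_parallel hseg hline hd2
    (x1 := a + b - c) (x1' := a) (x2 := b) (x2' := c)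
    ⟨1, hc2A2⟩ ⟨0, ha2⟩ ⟨1, hbB2⟩ ⟨0, hcB2⟩ hne_a hbc
  obtain ⟨lam2, hlam2, heq2⟩ := hP2
  -- heq2 : g b - g c = lam2 • (g (a+b-c) - g a)
  -- solve : substitute w := g(a+b-c) - g a
  have hsub : g (a + b - c) - g a = (g b - g a) - lam1 • (g c - g a) := by
    rw [← heq1]; module
  rw [hsub] at heq2
  -- g b - g c = lam2 • ((g b - g a) - lam1 • (g c - g a))
  have h3 : (lam2 * lam1 - 1) • (g c - g a) + (1 - lam2) • (g b - g a) = 0 := by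
    rw [sub_smul, sub_smul, one_smul, one_smul, mul_smul]
    have : g b - g c = (g b - g a) - (g c - g a) := by module
    rw [this] at heq2
    rw [smul_sub] at heq2
    -- heq2 : (g b - g a) - (g c - g a) = lam2 • (g b - g a) - lam2 • (lam1 • (g c - g a))
    have h4 : lam2 • lam1 • (g c - g a) - (g c - g a) + ((g b - g a) - lam2 • (g b - g a)) =
        (g b - g a - (g c - g a)) - (lam2 • (g b - g a) - lam2 • lam1 • (g c - g a)) := by
      module
    rw [h4, ← heq2, sub_self]
  obtain ⟨he1, he2⟩ := hind2 _ _ h3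
  have hlam2' : lam2 = 1 := by linarith
  have hlam1' : lam1 = 1 := by
    have : lam2 * lam1 = 1 := by linarith
    rw [hlam2', one_mul] at this
    exact this
  -- conclude
  have : g (a + b - c) - g a = (g b - g a) - (g c - g a) := by
    rw [hsub, hlam1', one_smul]
  have h5 : g (a + b - c) = g (a+b-c) - g a + g a := by module
  rw [h5, this]
  module

lemma aux_exists_off_line
    (hind : ∃ astar a₀ a₁ : X, ∀ r s : ℝ,
      r • (g a₀ - g astar) + s • (g a₁ - g astar) = 0 → r = 0 ∧ s = 0)
    {a b : X} (hba : g b ≠ g a) :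
    ∃ c : X, ∀ r s : ℝ, r • (g c - g a) + s • (g b - g a) = 0 → r = 0 ∧ s = 0 := by
  obtain ⟨astar, a₀, a₁, H⟩ := hind
  by_contra hno
  have hno' : ∀ c : X, ¬ ∀ r s : ℝ, r • (g c - g a) + s • (g b - g a) = 0 → r = 0 ∧ s = 0 :=
    fun c hc => hno ⟨c, hc⟩
  have hv : g b - g a ≠ 0 := sub_ne_zero.mpr hba
  obtain ⟨β2, hβ2⟩ := aux_dep hv (hno' astar)
  obtain ⟨β0, hβ0⟩ := aux_dep hv (hno' a₀)
  obtain ⟨β1, hβ1⟩ := aux_dep hv (hno' a₁)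
  have h0 : g a₀ - g astar = (β0 - β2) • (g b - g a) := by
    have : g a₀ - g astar = (g a₀ - g a) - (g astar - g a) := by module
    rw [this, hβ0, hβ2]; module
  have h1 : g a₁ - g astar = (β1 - β2) • (g b - g a) := by
    have : g a₁ - g astar = (g a₁ - g a) - (g astar - g a) := by module
    rw [this, hβ1, hβ2]; module
  have hrel : (β1 - β2) • (g a₀ - g astar) + (-(β0 - β2)) • (g a₁ - g astar) = 0 := by
    rw [h0, h1, smul_smul, smul_smul]
    rw [← add_smul]
    have : (β1 - β2) * (β0 - β2) + -(β0 - β2) * (β1 - β2) = 0 := by ring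
    rw [this, zero_smul]
  obtain ⟨hc1, hc2⟩ := H _ _ hrel
  have hz : g a₀ - g astar = 0 := by
    rw [h0]
    have : β0 - β2 = 0 := by linarith
    rw [this, zero_smul]
  have := (H 1 0 (by rw [hz, smul_zero, zero_smul, add_zero])).1
  norm_num at this

lemma aux_midpoint
    (hseg : ∀ a b c : X, InOpenSegment a b c →
      (g a = g c ∧ g b = g c) ∨ InOpenSegment (g a) (g b) (g c))
    (hline : ∀ L : Set X, IsLine L → IsPoint (g '' L) ∨ IsLine (g '' L))
    (hind : ∃ astar a₀ a₁ : X, ∀ r s : ℝ,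
      r • (g a₀ - g astar) + s • (g a₁ - g astar) = 0 → r = 0 ∧ s = 0)
    (a b : X) : g ((1/2 : ℝ) • (a + b)) = (1/2 : ℝ) • (g a + g b) := by
  by_cases hab : g a = g b
  · by_cases hab' : a = b
    · subst hab'
      have : (1/2 : ℝ) • (a + a) = a := by module
      rw [this, hab]
      module
    · have hmem : InOpenSegment a b ((1/2:ℝ) • (a + b)) :=
        ⟨1/2, by norm_num, by norm_num, by module⟩
      rw [aux_const_on_seg hseg hab hmem, hab]
      module
  · obtain ⟨c, hind2⟩ := aux_exists_off_line hind (fun h => hab h.symm)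
    have hc2 := aux_parallelogram hseg hline hind2
    have hab' : a ≠ b := fun h => hab (by rw [h])
    have hmem1 : InOpenSegment a b ((1/2:ℝ) • (a + b)) :=
      ⟨1/2, by norm_num, by norm_num, by module⟩
    have hmem2 : InOpenSegment c (a + b - c) ((1/2:ℝ) • (a + b)) :=
      ⟨1/2, by norm_num, by norm_num, by module⟩
    rcases hseg _ _ _ hmem1 with ⟨h1, h2⟩ | ⟨t, ht0, ht1, hteq⟩
    · exact absurd (h1.trans h2.symm) hab
    rcases hseg _ _ _ hmem2 with ⟨h1, h2⟩ | ⟨s, hs0, hs1, hseq⟩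
    · -- g c = g m lies on the segment: contradiction with independence
      exfalso
      rw [← h1] at hteq
      -- g c = t • (g b - g a) + g a
      have h3 : (1:ℝ) • (g c - g a) + (-t) • (g b - g a) = 0 := by
        rw [hteq]; module
      have := (hind2 _ _ h3).1
      norm_num at this
    · -- combine the two expressions for g m
      rw [hc2] at hseq
      -- hseq : g m = s • ((g a + g b - g c) - g c) + g c
      have h3 : (1 - 2*s) • (g c - g a) + (s - t) • (g b - g a) = 0 := by
        have h4 : (1 - 2*s) • (g c - g a) + (s - t) • (g b - g a) =
            (s • ((g a + g b - g c) - g c) + g c) - (t • (g b - g a) + g a) := by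
          module
        rw [h4, ← hseq, ← hteq, sub_self]
      obtain ⟨he1, he2⟩ := hind2 _ _ h3
      have hs' : s = 1/2 := by linarith
      have ht' : t = 1/2 := by linarith
      rw [hteq, ht']
      module
end Aux5

section Aux6
variable {X Y : Type*} [AddCommGroup X] [Module ℝ X] [AddCommGroup Y] [Module ℝ Y]
variable {g : X → Y}

lemma aux_segment
    (hseg : ∀ a b c : X, InOpenSegment a b c →
      (g a = g c ∧ g b = g c) ∨ InOpenSegment (g a) (g b) (g c))
    (hline : ∀ L : Set X, IsLine L → IsPoint (g '' L) ∨ IsLine (g '' L))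
    (hind : ∃ astar a₀ a₁ : X, ∀ r s : ℝ,
      r • (g a₀ - g astar) + s • (g a₁ - g astar) = 0 → r = 0 ∧ s = 0)
    (a b : X) {t : ℝ} (h0 : 0 ≤ t) (h1 : t ≤ 1) :
    g (t • (b - a) + a) = t • (g b - g a) + g a := by
  by_cases hab : g a = g b
  · rw [← hab, sub_self, smul_zero, zero_add]
    rcases eq_or_lt_of_le h0 with h | h
    · rw [← h, zero_smul, zero_add]
    rcases eq_or_lt_of_le h1 with h' | h'
    · rw [h', one_smul, sub_add_cancel]
      exact hab.symm
    · exact aux_const_on_seg hseg hab ⟨t, h, h', rfl⟩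
  · have hv : g b - g a ≠ 0 := sub_ne_zero.mpr fun h => hab h.symm
    have hcancel : ∀ {s s' : ℝ}, s • (g b - g a) = s' • (g b - g a) → s = s' :=
      fun h => aux_smul_cancel hv h
    have key : ∀ t : ℝ, 0 ≤ t → t ≤ 1 → ∃ s : ℝ, 0 ≤ s ∧ s ≤ 1 ∧
        g (t • (b - a) + a) = s • (g b - g a) + g a := by
      intro t h0 h1
      rcases eq_or_lt_of_le h0 with h | h
      · refine ⟨0, le_refl 0, by norm_num, ?_⟩
        rw [← h, zero_smul, zero_add, zero_smul, zero_add]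
      rcases eq_or_lt_of_le h1 with h' | h'
      · refine ⟨1, by norm_num, le_refl 1, ?_⟩
        rw [h', one_smul, one_smul, sub_add_cancel]
        module
      · rcases hseg a b _ ⟨t, h, h', rfl⟩ with ⟨ha', hb'⟩ | ⟨s, hs0, hs1, hs⟩
        · exact absurd (ha'.trans hb'.symm) hab
        · exact ⟨s, le_of_lt hs0, le_of_lt hs1, hs⟩
    obtain ⟨φ, hφ⟩ : ∃ φ : ℝ → ℝ, ∀ t : ℝ, 0 ≤ t → t ≤ 1 →
        0 ≤ φ t ∧ φ t ≤ 1 ∧ g (t • (b - a) + a) = φ t • (g b - g a) + g a :=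
      ⟨fun t => if h : 0 ≤ t ∧ t ≤ 1 then (key t h.1 h.2).choose else t,
        fun t h0 h1 => by
          simp only [dif_pos (⟨h0, h1⟩ : 0 ≤ t ∧ t ≤ 1)]
          exact (key t h0 h1).choose_spec⟩
    have hφ0 : φ 0 = 0 := by
      have h := (hφ 0 (le_refl 0) zero_le_one).2.2
      rw [zero_smul, zero_add] at h
      exact hcancel (by rw [zero_smul]; exact (right_eq_add.mp h))
    have hφ1 : φ 1 = 1 := by
      have h := (hφ 1 zero_le_one (le_refl 1)).2.2
      rw [one_smul, sub_add_cancel] at h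
      have h2 : g b = (1:ℝ) • (g b - g a) + g a := by module
      exact hcancel (add_right_cancel ((h.symm.trans h2)))
    have hstrict : ∀ t : ℝ, 0 < t → t < 1 → 0 < φ t ∧ φ t < 1 := by
      intro t ht0 ht1
      rcases hseg a b _ ⟨t, ht0, ht1, rfl⟩ with ⟨ha', hb'⟩ | ⟨s, hs0, hs1, hs⟩
      · exact absurd (ha'.trans hb'.symm) hab
      · have h2 := (hφ t ht0.le ht1.le).2.2
        have h3 : φ t = s := hcancel (add_right_cancel (h2.symm.trans hs))
        rw [h3]
        exact ⟨hs0, hs1⟩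
    have hφpos : ∀ t : ℝ, 0 < t → t ≤ 1 → 0 < φ t := by
      intro t ht0 ht1
      rcases eq_or_lt_of_le ht1 with h | h
      · rw [h, hφ1]; norm_num
      · exact (hstrict t ht0 h).1
    have hmono : ∀ s t : ℝ, 0 ≤ s → s < t → t ≤ 1 → φ s < φ t := by
      intro s t hs0 hst ht1
      rcases eq_or_lt_of_le hs0 with h | h
      · rw [← h, hφ0]
        exact hφpos t (by linarith) ht1
      · have ht0 : (0:ℝ) < t := lt_trans h hst
        have hmem : InOpenSegment a (t • (b - a) + a) (s • (b - a) + a) := by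
          refine ⟨s/t, div_pos h ht0, (div_lt_one ht0).mpr hst, ?_⟩
          match_scalars <;> field_simp <;> ring
        have hs1' : s ≤ 1 := by linarith
        rcases hseg _ _ _ hmem with ⟨ha', _⟩ | ⟨α, hα0, hα1, hαeq⟩
        · exfalso
          have h2 := (hφ s hs0 hs1').2.2
          rw [← ha'] at h2
          have h3 : φ s = 0 := hcancel (by rw [zero_smul]; exact (right_eq_add.mp h2))
          have h4 := hφpos s h hs1'
          linarith
        · have h2 := (hφ s hs0 hs1').2.2
          have h3 := (hφ t ht0.le ht1).2.2
          rw [h2, h3] at hαeq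
          have h4 : φ s • (g b - g a) + g a = (α * φ t) • (g b - g a) + g a := by
            rw [hαeq]; module
          have h5 : φ s = α * φ t := hcancel (add_right_cancel h4)
          have h6 : 0 < φ t := hφpos t ht0 ht1
          rw [h5]
          calc α * φ t < 1 * φ t := mul_lt_mul_of_pos_right hα1 h6
            _ = φ t := one_mul _
    have hmid : ∀ s t : ℝ, 0 ≤ s → s ≤ 1 → 0 ≤ t → t ≤ 1 →
        φ ((s + t)/2) = (φ s + φ t)/2 := by
      intro s t hs0 hs1 ht0 ht1
      have hM := aux_midpoint hseg hline hind (s • (b - a) + a) (t • (b - a) + a)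
      have e1 : (1/2:ℝ) • ((s • (b - a) + a) + (t • (b - a) + a)) =
          ((s+t)/2) • (b - a) + a := by
        match_scalars <;> ring
      rw [e1] at hM
      have h2 := (hφ ((s+t)/2) (by linarith) (by linarith)).2.2
      have h3 := (hφ s hs0 hs1).2.2
      have h4 := (hφ t ht0 ht1).2.2
      rw [h2, h3, h4] at hM
      have h5 : φ ((s+t)/2) • (g b - g a) + g a =
          ((φ s + φ t)/2) • (g b - g a) + g a := by
        rw [hM]; module
      exact hcancel (add_right_cancel h5)
    have hdy : ∀ n : ℕ, ∀ k : ℕ, k ≤ 2^n → φ ((k : ℝ) / 2^n) = (k : ℝ) / 2^n := by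
      intro n
      induction n with
      | zero =>
        intro k hk
        norm_num at hk
        interval_cases k
        · simpa using hφ0
        · simpa using hφ1
      | succ n ih =>
        intro k hk
        rcases Nat.even_or_odd k with ⟨j, hj⟩ | ⟨j, hj⟩
        · subst hj
          have hj2 : j ≤ 2^n := by
            have h2 : 2^(n+1) = 2*2^n := by ring
            omega
          have e1 : ((j + j : ℕ) : ℝ) / 2^(n+1) = (j : ℝ) / 2^n := by
            push_cast
            rw [pow_succ]
            field_simp
            ring
          rw [e1]
          exact ih j hj2
        · subst hj
          have hj2 : j ≤ 2^n ∧ j + 1 ≤ 2^n := by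
            have h2 : 2^(n+1) = 2*2^n := by ring
            omega
          have e1 : ((2*j + 1 : ℕ) : ℝ) / 2^(n+1) =
              (((j:ℝ)/2^n) + (((j:ℝ)+1)/2^n))/2 := by
            push_cast
            rw [pow_succ]
            field_simp
            ring
          have hb1 : (0:ℝ) ≤ (j:ℝ)/2^n := by positivity
          have hb2 : (j:ℝ)/2^n ≤ 1 := by
            rw [div_le_one (by positivity)]
            exact_mod_cast hj2.1
          have hb3 : (0:ℝ) ≤ ((j:ℝ)+1)/2^n := by positivity
          have hb4 : ((j:ℝ)+1)/2^n ≤ 1 := by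
            rw [div_le_one (by positivity)]
            exact_mod_cast hj2.2
          rw [e1, hmid _ _ hb1 hb2 hb3 hb4, ih j hj2.1]
          have e2 : ((j:ℝ)+1)/2^n = ((j+1 : ℕ) : ℝ)/2^n := by push_cast; ring
          rw [e2, ih (j+1) hj2.2]
    have hdense : ∀ x y : ℝ, 0 ≤ x → x < y → y ≤ 1 →
        ∃ n k : ℕ, k ≤ 2^n ∧ x < (k:ℝ)/2^n ∧ (k:ℝ)/2^n < y := by
      intro x y hx hxy hy1
      obtain ⟨n, hn⟩ := exists_pow_lt_of_lt_one (sub_pos.mpr hxy) (by norm_num : (1/2:ℝ) < 1)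
      have hpos : (0:ℝ) < 2^n := by positivity
      have hlt1 : x < (↑(⌊x * 2^n⌋₊ + 1))/2^n := by
        rw [lt_div_iff₀ hpos]
        push_cast
        exact Nat.lt_floor_add_one (x * 2^n)
      have hlt2 : (↑(⌊x * 2^n⌋₊ + 1))/2^n < y := by
        rw [div_lt_iff₀ hpos]
        have hfl : (⌊x * 2^n⌋₊ : ℝ) ≤ x * 2^n := Nat.floor_le (by positivity)
        have hone : (1:ℝ) < (y - x) * 2^n := by
          have h2 := mul_lt_mul_of_pos_right hn hpos
          rw [← mul_pow] at h2
          norm_num at h2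
          linarith
        push_cast
        nlinarith
      have hk2n : ⌊x * 2^n⌋₊ + 1 ≤ 2^n := by
        have h3 : (↑(⌊x * 2^n⌋₊ + 1) : ℝ) < 2^n := by
          have := lt_of_lt_of_le hlt2 hy1
          rw [div_lt_one hpos] at this
          exact this
        have h4 : ⌊x * 2^n⌋₊ + 1 < 2^n := by exact_mod_cast h3
        omega
      exact ⟨n, ⌊x * 2^n⌋₊ + 1, hk2n, hlt1, hlt2⟩
    have hφid : φ t = t := by
      rcases lt_trichotomy (φ t) t with hlt | heq | hgt
      · exfalso
        have hb0 : 0 ≤ φ t := (hφ t h0 h1).1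
        obtain ⟨n, k, hk, hq1, hq2⟩ := hdense (φ t) t hb0 hlt h1
        have hq0 : (0:ℝ) ≤ (k:ℝ)/2^n := by positivity
        have h2 := hmono ((k:ℝ)/2^n) t hq0 hq2 h1
        rw [hdy n k hk] at h2
        linarith
      · exact heq
      · exfalso
        have hb1 : φ t ≤ 1 := (hφ t h0 h1).2.1
        obtain ⟨n, k, hk, hq1, hq2⟩ := hdense t (φ t) h0 hgt hb1
        have hq3 : (k:ℝ)/2^n ≤ 1 := by
          rw [div_le_one (by positivity)]
          exact_mod_cast hk
        have h2 := hmono t ((k:ℝ)/2^n) h0 hq1 hq3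
        rw [hdy n k hk] at h2
        linarith
    rw [(hφ t h0 h1).2.2, hφid]
end Aux6

section Aux7
variable {X Y : Type*} [AddCommGroup X] [Module ℝ X] [AddCommGroup Y] [Module ℝ Y]
variable {g : X → Y}

lemma aux_line
    (hseg : ∀ a b c : X, InOpenSegment a b c →
      (g a = g c ∧ g b = g c) ∨ InOpenSegment (g a) (g b) (g c))
    (hline : ∀ L : Set X, IsLine L → IsPoint (g '' L) ∨ IsLine (g '' L))
    (hind : ∃ astar a₀ a₁ : X, ∀ r s : ℝ,
      r • (g a₀ - g astar) + s • (g a₁ - g astar) = 0 → r = 0 ∧ s = 0)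
    (a b : X) (t : ℝ) : g (t • (b - a) + a) = t • (g b - g a) + g a := by
  rcases le_or_gt 0 t with h0 | h0
  · rcases le_or_gt t 1 with h1 | h1
    · exact aux_segment hseg hline hind a b h0 h1
    · -- t > 1
      have ht : t ≠ 0 := by linarith
      have h := aux_segment hseg hline hind a (t • (b - a) + a)
        (t := 1/t) (by positivity) ((div_le_one (by linarith)).mpr (by linarith))
      have e1 : (1/t) • ((t • (b - a) + a) - a) + a = b := by
        match_scalars <;> field_simp <;> ring
      rw [e1] at h
      have h2 : g b - g a = (1/t) • (g (t • (b - a) + a) - g a) := by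
        rw [h]; module
      have h3 : g (t • (b - a) + a) - g a = t • (g b - g a) := by
        rw [h2, smul_smul, mul_one_div, div_self ht, one_smul]
      exact eq_add_of_sub_eq h3
  · -- t < 0
    have h1t : (0:ℝ) < 1 - t := by linarith
    have hσ1 : -t/(1-t) < 1 := (div_lt_one h1t).mpr (by linarith)
    have h := aux_segment hseg hline hind (t • (b - a) + a) b
      (t := -t/(1-t)) (le_of_lt (div_pos (by linarith) h1t)) (le_of_lt hσ1)
    have e1 : (-t/(1-t)) • (b - (t • (b - a) + a)) + (t • (b - a) + a) = a := by
      match_scalars <;> field_simp <;> ring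
    rw [e1] at h
    have hsol := aux_solve hσ1 h
    rw [hsol]
    have hσval : 1/(1 - (-t/(1-t))) = 1 - t := by
      field_simp
      ring
    rw [hσval]
    module
end Aux7

theorem affine_iff_line_and_segment_preserving
    {X Y : Type*} [AddCommGroup X] [Module ℝ X] [AddCommGroup Y] [Module ℝ Y]
    (g : X → Y)
    (hind : ∃ astar a₀ a₁ : X, ∀ r s : ℝ,
      r • (g a₀ - g astar) + s • (g a₁ - g astar) = 0 → r = 0 ∧ s = 0) :
    IsAffineMapping g ↔
      ((∀ L : Set X, IsLine L → IsPoint (g '' L) ∨ IsLine (g '' L)) ∧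
        (∀ a b c : X, InOpenSegment a b c →
          (g a = g c ∧ g b = g c) ∨ InOpenSegment (g a) (g b) (g c))) := by
  constructor
  · rintro ⟨f, bb, hsmul, hadd, hg⟩
    have hsub : ∀ x y : X, f (x - y) = f x - f y := by
      intro x y
      have h := hadd (x - y) y
      rw [sub_add_cancel] at h
      exact eq_sub_of_add_eq h.symm
    constructor
    · rintro L ⟨o, d, hd, rfl⟩
      by_cases hfd : f d = 0
      · left
        refine ⟨f o + bb, ?_⟩
        ext y
        simp only [Set.mem_image, Set.mem_setOf_eq, Set.mem_singleton_iff]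
        constructor
        · rintro ⟨x, ⟨r, rfl⟩, rfl⟩
          rw [hg, hadd, hsmul, hfd, smul_zero, zero_add]
        · rintro rfl
          refine ⟨(0:ℝ) • d + o, ⟨0, rfl⟩, ?_⟩
          rw [hg, hadd, hsmul, hfd, smul_zero, zero_add]
      · right
        refine ⟨f o + bb, f d, hfd, ?_⟩
        ext y
        simp only [Set.mem_image, Set.mem_setOf_eq]
        constructor
        · rintro ⟨x, ⟨r, rfl⟩, rfl⟩
          refine ⟨r, ?_⟩
          rw [hg, hadd, hsmul]
          abel
        · rintro ⟨r, rfl⟩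
          refine ⟨r • d + o, ⟨r, rfl⟩, ?_⟩
          rw [hg, hadd, hsmul]
          abel
    · rintro a b c ⟨t, ht0, ht1, rfl⟩
      right
      refine ⟨t, ht0, ht1, ?_⟩
      rw [hg, hg, hg, hadd, hsmul, hsub]
      module
  · rintro ⟨hline, hseg⟩
    refine ⟨fun x => g x - g 0, g 0, ?_, ?_, fun x => by module⟩
    · intro c x
      have h := aux_line hseg hline hind 0 x c
      have e1 : c • (x - 0) + 0 = c • x := by module
      rw [e1] at h
      show g (c • x) - g 0 = c • (g x - g 0)
      rw [h]
      module
    · intro x y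
      have hM := aux_midpoint hseg hline hind x y
      have h2 := aux_line hseg hline hind 0 ((1/2:ℝ) • (x + y)) 2
      have e1 : (2:ℝ) • ((1/2:ℝ) • (x + y) - 0) + 0 = x + y := by module
      rw [e1] at h2
      show g (x + y) - g 0 = (g x - g 0) + (g y - g 0)
      rw [h2, hM]
      module
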